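/- Let n ≥ 1 be an integer and let (a, b, c) ∈ ℤ³ satisfy b² − 4ac = 4n. Suppose that each of the three rescaled points (a/(2√n), b/(2√n), c/(2√n)), the rescaling of T(a, b, c) = (a, b + 2a, a + b + c) by 1/(2√n), and the rescaling of U(a, b, c) = (c, −b + 2c, a − b + c) by 1/(2√n) lies in K := {(A, B, C) ∈ ℝ³ : B² − 4AC = 1, |A − C| < 1, |B| < 1, |A + C| < 1}. Then there exist integers x, y, z with x² + y² − z² = n and max(x², y², z²) < n. -/

import Mathlib

/-- The one-sheeted hyperboloid `V = {(A,B,C) : B² − 4AC = 1}` in `ℝ³`. -/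
def hypV : Set (ℝ × ℝ × ℝ) := {p | p.2.1 ^ 2 - 4 * p.1 * p.2.2 = 1}

/-- The open patch `K` of the hyperboloid. -/
def patchK : Set (ℝ × ℝ × ℝ) :=
  {p | p ∈ hypV ∧ |p.1 - p.2.2| < 1 ∧ |p.2.1| < 1 ∧ |p.1 + p.2.2| < 1}

lemma key_lemma (n : ℤ) (hn : 1 ≤ n) (a b c : ℤ)
    (hd : b ^ 2 - 4 * a * c = 4 * n) (hb : 2 ∣ b) (hac : 2 ∣ (a + c))
    (hK : (((a : ℝ) / (2 * Real.sqrt n), (b : ℝ) / (2 * Real.sqrt n),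
        (c : ℝ) / (2 * Real.sqrt n)) : ℝ × ℝ × ℝ) ∈ patchK) :
    ∃ x y z : ℤ, x ^ 2 + y ^ 2 - z ^ 2 = n ∧
      max (x ^ 2) (max (y ^ 2) (z ^ 2)) < n := by
  obtain ⟨y, hy⟩ := hb
  obtain ⟨z, hz⟩ := hac
  have ha : a = 2 * z - c := by omega
  have hnpos : (0:ℝ) < (n:ℝ) := by exact_mod_cast lt_of_lt_of_le zero_lt_one hn
  have hs : (0:ℝ) < Real.sqrt n := Real.sqrt_pos.mpr hnpos
  have hs2 : (2 * Real.sqrt n) ^ 2 = 4 * (n:ℝ) := by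
    rw [mul_pow, Real.sq_sqrt hnpos.le]; ring
  have key2 : ∀ t : ℝ, |t / (2 * Real.sqrt n)| < 1 → t ^ 2 < 4 * (n:ℝ) := by
    intro t ht
    have h2 : |t| < 2 * Real.sqrt n := by
      rw [abs_div, div_lt_one (by positivity)] at ht
      rwa [abs_of_pos (by positivity : (0:ℝ) < 2 * Real.sqrt n)] at ht
    calc t ^ 2 = |t| ^ 2 := (sq_abs t).symm
      _ < (2 * Real.sqrt n) ^ 2 := by
          exact pow_lt_pow_left₀ h2 (abs_nonneg t) (by norm_num)
      _ = 4 * n := hs2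
  simp only [patchK, hypV, Set.mem_setOf_eq] at hK
  obtain ⟨-, h1, h2, h3⟩ := hK
  rw [div_sub_div_same] at h1
  rw [← add_div] at h3
  have b1 : ((a:ℝ) - c) ^ 2 < 4 * n := key2 _ h1
  have b2 : ((b:ℝ)) ^ 2 < 4 * n := key2 _ h2
  have b3 : ((a:ℝ) + c) ^ 2 < 4 * n := key2 _ h3
  have b1' : (a - c) ^ 2 < 4 * n := by exact_mod_cast (by push_cast; exact b1 : ((a - c : ℤ):ℝ) ^ 2 < ((4*n : ℤ):ℝ))
  have b2' : b ^ 2 < 4 * n := by exact_mod_cast (by push_cast; exact b2 : ((b : ℤ):ℝ) ^ 2 < ((4*n : ℤ):ℝ))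
  have b3' : (a + c) ^ 2 < 4 * n := by exact_mod_cast (by push_cast; exact b3 : ((a + c : ℤ):ℝ) ^ 2 < ((4*n : ℤ):ℝ))
  refine ⟨z - c, y, z, ?_, ?_⟩
  · have h4 : 4 * ((z - c) ^ 2 + y ^ 2 - z ^ 2) = 4 * n := by
      subst hy ha; linear_combination hd
    linarith
  · have e1 : 4 * (z - c) ^ 2 = (a - c) ^ 2 := by rw [ha]; ring
    have e2 : 4 * y ^ 2 = b ^ 2 := by rw [hy]; ring
    have e3 : 4 * z ^ 2 = (a + c) ^ 2 := by rw [hz]; ring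
    refine max_lt ?_ (max_lt ?_ ?_) <;> linarith

/-- Combined deduction in the proof of the main theorem: if `(a,b,c)` has discriminant `4n`
and the rescalings by `1/(2√n)` of all three triples `(a,b,c)`, `T(a,b,c)`, `U(a,b,c)`
lie in `K`, then `n = x² + y² − z²` with `max(x², y², z²) < n`. -/
theorem representation_from_patch (n : ℤ) (hn : 1 ≤ n) (a b c : ℤ)
    (hdisc : b ^ 2 - 4 * a * c = 4 * n)
    (hK : (((a : ℝ) / (2 * Real.sqrt n), (b : ℝ) / (2 * Real.sqrt n),
        (c : ℝ) / (2 * Real.sqrt n)) : ℝ × ℝ × ℝ) ∈ patchK)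
    (hKT : (((a : ℝ) / (2 * Real.sqrt n), ((b : ℝ) + 2 * a) / (2 * Real.sqrt n),
        ((a : ℝ) + b + c) / (2 * Real.sqrt n)) : ℝ × ℝ × ℝ) ∈ patchK)
    (hKU : (((c : ℝ) / (2 * Real.sqrt n), (-(b : ℝ) + 2 * c) / (2 * Real.sqrt n),
        ((a : ℝ) - b + c) / (2 * Real.sqrt n)) : ℝ × ℝ × ℝ) ∈ patchK) :
    ∃ x y z : ℤ, x ^ 2 + y ^ 2 - z ^ 2 = n ∧
      max (x ^ 2) (max (y ^ 2) (z ^ 2)) < n := by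
  have hb : 2 ∣ b := by
    have h2 : (2:ℤ) ∣ b ^ 2 := ⟨2 * n + 2 * (a * c), by linarith⟩
    exact Int.prime_two.dvd_of_dvd_pow h2
  rcases Int.even_or_odd (a + c) with hac | hac
  · exact key_lemma n hn a b c hdisc hb hac.two_dvd hK
  · rcases Int.even_or_odd c with hc | hc
    · -- c even: use T(a,b,c) = (a, b+2a, a+b+c)
      refine key_lemma n hn a (b + 2*a) (a + b + c)
        (by linear_combination hdisc) (by omega)
        (by obtain ⟨k, hk⟩ := hb; obtain ⟨m, hm⟩ := hc; omega) ?_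
      convert hKT using 3 <;> push_cast <;> ring
    · -- c odd, so a even: use U(a,b,c) = (c, -b+2c, a-b+c)
      refine key_lemma n hn c (-b + 2*c) (a - b + c)
        (by linear_combination hdisc) (by omega)
        (by obtain ⟨k, hk⟩ := hb; rcases hac with ⟨m, hm⟩; rcases hc with ⟨j, hj⟩; omega) ?_
      convert hKU using 3 <;> push_cast <;> ring
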